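/- Let (T(t)) and (S(t)) be C₀-semigroups on a Banach space E, with (A,dom(A)) the generator of (T(t)), 0 ∈ ρ(A), and extrapolation data (E₋₁,ι,T₋₁,A₋₁). Let (𝒰(t)) and (𝒱(t)) be the semigroups on 𝓛(E) left implemented by (T(t)) and (S(t)) respectively, and let (𝒢,dom(𝒢)) be the generator of (𝒰(t)). Suppose 𝒦 : 𝓛(E) → 𝓛(E,E₋₁) belongs to the admissibility class 𝒮^{DS,τ_sot}_{t₀}(𝒰) for some t₀ > 0 and that 𝒞 := (𝒢₋₁+𝒦)|_{𝓛(E)} (with maximal domain {C ∈ 𝓛(E) : 𝒢₋₁C + 𝒦C ∈ 𝓛(E)}) is the generator of (𝒱(t)). Then 𝒦 is a right multiplication-type operator: 𝒦(C∘D) = 𝒦(C)∘D for all C, D ∈ 𝓛(E). -/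

import Mathlib

open Set Filter Topology MeasureTheory

variable {E E₁ : Type*} [NormedAddCommGroup E] [NormedSpace ℝ E]
  [NormedAddCommGroup E₁] [NormedSpace ℝ E₁]

/-- A `C₀`-semigroup on a Banach space `E`. -/
structure IsC0Semigroup (T : ℝ → E →L[ℝ] E) : Prop where
  map_zero : T 0 = 1
  map_add : ∀ s t : ℝ, 0 ≤ s → 0 ≤ t → T (s + t) = (T s).comp (T t)
  strongCont : ∀ x : E, ContinuousOn (fun t => T t x) (Ici (0:ℝ))

/-- The generator relation of a `C₀`-semigroup: `y = Ax`. -/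
def C0GenRel (T : ℝ → E →L[ℝ] E) (x y : E) : Prop :=
  Tendsto (fun t : ℝ => t⁻¹ • (T t x - x)) (nhdsWithin 0 (Ioi 0)) (nhds y)

/-- Extrapolation data `(E₋₁, ι, T₋₁, A₋₁)` for a `C₀`-semigroup `T` with `0 ∈ ρ(A)`:
`ι : E → E₋₁` is a continuous dense injection, `T₋₁` a `C₀`-semigroup on `E₋₁` extending `T`
via `ι`, whose generator `A₋₁` has domain `ι(E)`, extends `A`, and `Am = A₋₁ ∘ ι : E → E₋₁`
is an isomorphism. -/
structure ExtrapolationData (T : ℝ → E →L[ℝ] E) (T₁ : ℝ → E₁ →L[ℝ] E₁)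
    (ι : E →L[ℝ] E₁) (Am : E ≃L[ℝ] E₁) : Prop where
  c0T : IsC0Semigroup T
  c0T₁ : IsC0Semigroup T₁
  inj : Function.Injective ι
  dense : DenseRange ι
  intertwine : ∀ t : ℝ, 0 ≤ t → ∀ x : E, T₁ t (ι x) = ι (T t x)
  gen₁ : ∀ x : E, C0GenRel T₁ (ι x) (Am x)
  gen₁_dom : ∀ z y : E₁, C0GenRel T₁ z y → z ∈ Set.range ι
  gen_extends : ∀ x y : E, C0GenRel T x y → (Am x : E₁) = ι y
  zero_res : ∃ R : E →L[ℝ] E, (∀ y : E, C0GenRel T (R y) y) ∧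
    ∀ x y : E, C0GenRel T x y → x = R y

/-- The Desch–Schappacher admissibility class `𝒮^{DS}_{t₀}(T)` for a `C₀`-semigroup:
for every strongly continuous `𝓛(E)`-valued `F` the Volterra integrals take values in `ι(E)`,
give a strongly continuous `𝓛(E)`-valued function `V_B F`, and `‖V_B‖ ≤ q < 1`. -/
def MemSDS (T₁ : ℝ → E₁ →L[ℝ] E₁) (ι : E →L[ℝ] E₁) (B : E →L[ℝ] E₁) (t₀ : ℝ) : Prop :=
  ∃ q : ℝ, 0 ≤ q ∧ q < 1 ∧
    ∀ F : ℝ → E →L[ℝ] E, (∀ x : E, ContinuousOn (fun r => F r x) (Icc (0:ℝ) t₀)) →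
      ∃ G : ℝ → E →L[ℝ] E,
        (∀ t ∈ Icc (0:ℝ) t₀, ∀ x : E,
          ι (G t x) = ∫ r in (0:ℝ)..t, T₁ (t - r) (B (F r x))) ∧
        (∀ x : E, ContinuousOn (fun t => G t x) (Icc (0:ℝ) t₀)) ∧
        ∀ c : ℝ, (∀ s ∈ Icc (0:ℝ) t₀, ‖F s‖ ≤ c) → ∀ t ∈ Icc (0:ℝ) t₀, ‖G t‖ ≤ q * c

/-- The semigroup on `𝓛(E)` left implemented by `T`: `𝒰(t)C := T(t) ∘ C`. -/
noncomputable def implemented (T : ℝ → E →L[ℝ] E) (t : ℝ) :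
    (E →L[ℝ] E) →L[ℝ] (E →L[ℝ] E) :=
  ContinuousLinearMap.compL ℝ E E E (T t)

/-- The extrapolated implemented semigroup on `𝓛(E,E₋₁)`: `𝒰₋₁(t)S := T₋₁(t) ∘ S`. -/
noncomputable def implementedExt (T₁ : ℝ → E₁ →L[ℝ] E₁) (t : ℝ) :
    (E →L[ℝ] E₁) →L[ℝ] (E →L[ℝ] E₁) :=
  ContinuousLinearMap.compL ℝ E E₁ E₁ (T₁ t)

/-- Membership in the space `𝔛_{t₀}` of strongly `τ_sot`-continuous, norm-bounded,
bi-equicontinuous functions `F : [0,t₀] → 𝓛(𝓛(E))`. -/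
def MemXsot (t₀ : ℝ) (F : ℝ → (E →L[ℝ] E) →L[ℝ] (E →L[ℝ] E)) : Prop :=
  (∀ (C : E →L[ℝ] E) (x : E), ContinuousOn (fun t => (F t C) x) (Icc (0:ℝ) t₀)) ∧
  (∃ M : ℝ, ∀ t ∈ Icc (0:ℝ) t₀, ‖F t‖ ≤ M) ∧
  ∀ u : ℕ → E →L[ℝ] E, (∃ c : ℝ, ∀ n, ‖u n‖ ≤ c) →
    (∀ x : E, Tendsto (fun n => u n x) atTop (nhds (0:E))) →
    ∀ x : E, ∀ ε > (0:ℝ), ∃ N : ℕ, ∀ n ≥ N, ∀ t ∈ Icc (0:ℝ) t₀, ‖(F t (u n)) x‖ < ε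

/-- The Desch–Schappacher admissibility class `𝒮^{DS,τ_sot}_{t₀}(𝒰)` for the implemented
semigroup: `𝒦 : 𝓛(E) → 𝓛(E,E₋₁)` is `τ_sot`-to-`τ_sot` continuous, and the Volterra operator
`(V_𝒦 F)(t)C = ∫₀ᵗ 𝒰₋₁(t-r) 𝒦(F(r)C) dr` takes values in `𝓛(E)`, maps `𝔛_{t₀}` into itself
and has `‖V_𝒦‖ ≤ q < 1`. -/
def MemSDSsot (T₁ : ℝ → E₁ →L[ℝ] E₁) (ι : E →L[ℝ] E₁)
    (K : (E →L[ℝ] E) →L[ℝ] (E →L[ℝ] E₁)) (t₀ : ℝ) : Prop :=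
  (∀ x : E, ∃ (v : Finset E) (c : ℝ), 0 ≤ c ∧
      ∀ S : E →L[ℝ] E, ‖(K S) x‖ ≤ c * ∑ y ∈ v, ‖S y‖) ∧
  ∃ q : ℝ, 0 ≤ q ∧ q < 1 ∧
    ∀ F : ℝ → (E →L[ℝ] E) →L[ℝ] (E →L[ℝ] E), MemXsot t₀ F →
      ∃ G : ℝ → (E →L[ℝ] E) →L[ℝ] (E →L[ℝ] E), MemXsot t₀ G ∧
        (∀ t ∈ Icc (0:ℝ) t₀, ∀ (C : E →L[ℝ] E) (x : E),
          ι ((G t C) x) = ∫ r in (0:ℝ)..t, T₁ (t - r) ((K (F r C)) x)) ∧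
        ∀ c : ℝ, (∀ s ∈ Icc (0:ℝ) t₀, ‖F s‖ ≤ c) → ∀ t ∈ Icc (0:ℝ) t₀, ‖G t‖ ≤ q * c

/-- A `τ_sot`-bi-continuous semigroup on `𝓛(E)`. -/
structure IsBiContSotSemigroup (U : ℝ → (E →L[ℝ] E) →L[ℝ] (E →L[ℝ] E)) : Prop where
  map_zero : U 0 = 1
  map_add : ∀ s t : ℝ, 0 ≤ s → 0 ≤ t → U (s + t) = (U s).comp (U t)
  strongCont : ∀ (C : E →L[ℝ] E) (x : E), ContinuousOn (fun t => (U t C) x) (Ici (0:ℝ))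
  expBound : ∃ M : ℝ, 1 ≤ M ∧ ∃ ω : ℝ, ∀ t : ℝ, 0 ≤ t → ‖U t‖ ≤ M * Real.exp (ω * t)
  biequi : ∀ t₀ : ℝ, 0 < t₀ → ∀ u : ℕ → E →L[ℝ] E, (∃ c : ℝ, ∀ n, ‖u n‖ ≤ c) →
    (∀ x : E, Tendsto (fun n => u n x) atTop (nhds (0:E))) →
    ∀ x : E, ∀ ε > (0:ℝ), ∃ N : ℕ, ∀ n ≥ N, ∀ t ∈ Icc (0:ℝ) t₀, ‖(U t (u n)) x‖ < ε

/-- The generator relation of a `τ_sot`-bi-continuous semigroup on `𝓛(E)`. -/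
def SotGenRel (U : ℝ → (E →L[ℝ] E) →L[ℝ] (E →L[ℝ] E)) (C Y : E →L[ℝ] E) : Prop :=
  (∀ x : E, Tendsto (fun t : ℝ => t⁻¹ • ((U t C) x - C x))
      (nhdsWithin 0 (Ioi 0)) (nhds (Y x))) ∧
    ∃ M : ℝ, ∀ t ∈ Ioc (0:ℝ) 1, ‖U t C - C‖ ≤ M * t

/-- `V` is a `τ_sot`-bi-continuous semigroup on `𝓛(E)` generated by `(𝒢₋₁ + 𝒦)|_{𝓛(E)}`,
where `𝒢₋₁ C = A₋₁ ∘ ι ∘ C` and the domain is `{C : 𝒢₋₁C + 𝒦C ∈ 𝓛(E)}`. -/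
def GeneratedByPerturbedImpl (V : ℝ → (E →L[ℝ] E) →L[ℝ] (E →L[ℝ] E))
    (ι : E →L[ℝ] E₁) (Am : E ≃L[ℝ] E₁)
    (K : (E →L[ℝ] E) →L[ℝ] (E →L[ℝ] E₁)) : Prop :=
  IsBiContSotSemigroup V ∧ ∀ C Y : E →L[ℝ] E,
    SotGenRel V C Y ↔ ι.comp Y = ((Am : E →L[ℝ] E₁)).comp C + K C


section AuxHelpers

variable {E : Type*} [NormedAddCommGroup E] [NormedSpace ℝ E]

lemma uIcc_subset_Ici0 {a b : ℝ} (ha : 0 ≤ a) (hb : 0 ≤ b) : Set.uIcc a b ⊆ Set.Ici 0 :=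
  fun x hx => le_trans (le_min ha hb) hx.1

lemma ftc_right [CompleteSpace E] {f : ℝ → E} (hf : ContinuousOn f (Ici 0)) {a : ℝ} (ha : 0 ≤ a) :
    Tendsto (fun t : ℝ => t⁻¹ • ∫ r in a..(a + t), f r) (nhdsWithin 0 (Ioi 0)) (nhds (f a)) := by
  rw [Metric.tendsto_nhdsWithin_nhds]
  intro ε hε
  obtain ⟨δ, hδ, hδ'⟩ := Metric.continuousWithinAt_iff.mp (hf a (mem_Ici.mpr ha)) (ε/2) (by linarith)
  refine ⟨δ, hδ, fun {t} ht hdist => ?_⟩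
  have ht' : (0:ℝ) < t := ht
  have htδ : t < δ := by
    have : |t| < δ := by simpa [Real.dist_eq] using hdist
    rwa [abs_of_pos ht'] at this
  have hint : IntervalIntegrable f MeasureTheory.volume a (a+t) :=
    (hf.mono (uIcc_subset_Ici0 ha (by linarith))).intervalIntegrable
  have key : t⁻¹ • (∫ r in a..(a+t), f r) - f a = t⁻¹ • ∫ r in a..(a+t), (f r - f a) := by
    rw [intervalIntegral.integral_sub hint intervalIntegrable_const,
      intervalIntegral.integral_const, smul_sub, add_sub_cancel_left, smul_smul,
      inv_mul_cancel₀ ht'.ne', one_smul]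
  have hb : ∀ r ∈ Set.uIoc a (a+t), ‖f r - f a‖ ≤ ε/2 := by
    intro r hr
    rw [Set.uIoc_of_le (by linarith)] at hr
    have h1 : (0:ℝ) ≤ r := le_trans ha hr.1.le
    have hdr : dist r a < δ := by
      rw [Real.dist_eq, abs_of_nonneg (by linarith [hr.1.le])]
      linarith [hr.2]
    have := hδ' (mem_Ici.mpr h1) hdr
    rw [dist_eq_norm] at this
    exact this.le
  have hnorm : ‖∫ r in a..(a+t), (f r - f a)‖ ≤ ε/2 * |a + t - a| :=
    intervalIntegral.norm_integral_le_of_norm_le_const hb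
  rw [add_sub_cancel_left, abs_of_pos ht'] at hnorm
  rw [dist_eq_norm, key, norm_smul, norm_inv, Real.norm_eq_abs, abs_of_pos ht']
  calc t⁻¹ * ‖∫ r in a..(a+t), (f r - f a)‖ ≤ t⁻¹ * (ε/2 * t) := by
        exact mul_le_mul_of_nonneg_left hnorm (by positivity)
    _ = ε/2 := by field_simp
    _ < ε := by linarith

end AuxHelpers

lemma exists_dom {E : Type*} [NormedAddCommGroup E] [NormedSpace ℝ E] [CompleteSpace E]
    (S : ℝ → E →L[ℝ] E) (hS : IsC0Semigroup S)
    (M ω : ℝ) (hbd : ∀ r : ℝ, 0 ≤ r → ‖S r‖ ≤ M * Real.exp (ω * r))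
    {s : ℝ} (hs : 0 < s) (C : E →L[ℝ] E) :
    ∃ Cs : E →L[ℝ] E, (∀ x, Cs x = ∫ r in (0:ℝ)..s, S r (C x)) ∧
      SotGenRel (implemented S) Cs (((S s).comp C) - C) := by
  have hM : 0 ≤ M := le_trans (norm_nonneg (S 0)) (by simpa using hbd 0 le_rfl)
  set B := M * Real.exp (|ω| * (s+1)) with hBdef
  have hB : ∀ r : ℝ, 0 ≤ r → r ≤ s + 1 → ‖S r‖ ≤ B := by
    intro r h0 h1
    refine le_trans (hbd r h0) (mul_le_mul_of_nonneg_left (Real.exp_le_exp.mpr ?_) hM)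
    calc ω * r ≤ |ω| * r := mul_le_mul_of_nonneg_right (le_abs_self ω) h0
      _ ≤ |ω| * (s+1) := mul_le_mul_of_nonneg_left h1 (abs_nonneg ω)
  have hB0 : 0 ≤ B := le_trans (norm_nonneg (S 0)) (hB 0 le_rfl (by linarith))
  have hcont : ∀ z : E, ContinuousOn (fun r => S r z) (Ici 0) := hS.strongCont
  have hii : ∀ (z : E) (a b : ℝ), 0 ≤ a → 0 ≤ b →
      IntervalIntegrable (fun r => S r z) MeasureTheory.volume a b :=
    fun z a b ha hb => ((hcont z).mono (uIcc_subset_Ici0 ha hb)).intervalIntegrable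
  set L : E →ₗ[ℝ] E :=
    { toFun := fun x => ∫ r in (0:ℝ)..s, S r (C x)
      map_add' := fun x y => by
        simp only [map_add]
        exact intervalIntegral.integral_add (hii (C x) 0 s le_rfl hs.le)
          (hii (C y) 0 s le_rfl hs.le)
      map_smul' := fun a x => by
        simp only [_root_.map_smul, RingHom.id_apply]
        exact intervalIntegral.integral_smul a fun r => S r (C x) } with hLdef
  have hLbound : ∀ x, ‖L x‖ ≤ (B * ‖C‖ * s) * ‖x‖ := by
    intro x
    have hpt : ∀ r ∈ Set.uIoc (0:ℝ) s, ‖S r (C x)‖ ≤ B * ‖C‖ * ‖x‖ := by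
      intro r hr
      rw [Set.uIoc_of_le hs.le] at hr
      calc ‖S r (C x)‖ ≤ ‖S r‖ * ‖C x‖ := (S r).le_opNorm _
        _ ≤ B * (‖C‖ * ‖x‖) := mul_le_mul (hB r hr.1.le (by linarith [hr.2]))
            (C.le_opNorm x) (norm_nonneg _) hB0
        _ = B * ‖C‖ * ‖x‖ := by ring
    have hn := intervalIntegral.norm_integral_le_of_norm_le_const hpt
    rw [sub_zero, abs_of_pos hs] at hn
    calc ‖L x‖ ≤ B * ‖C‖ * ‖x‖ * s := hn
      _ = (B * ‖C‖ * s) * ‖x‖ := by ring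
  set Cs : E →L[ℝ] E := L.mkContinuous (B*‖C‖*s) hLbound with hCsdef
  have hCsx : ∀ x, Cs x = ∫ r in (0:ℝ)..s, S r (C x) := fun x => rfl
  have himpl : ∀ (t : ℝ) (G : E →L[ℝ] E) (x : E), (implemented S t) G x = S t (G x) := by
    intro t G x; rfl
  have hdiff : ∀ t : ℝ, 0 < t → ∀ x : E,
      (implemented S t) Cs x - Cs x =
        (∫ r in s..(s+t), S r (C x)) - ∫ r in (0:ℝ)..(0+t), S r (C x) := by
    intro t ht x
    have h1 : (implemented S t) Cs x = ∫ r in (0:ℝ)..s, S t (S r (C x)) := by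
      rw [himpl, hCsx, ((S t).intervalIntegral_comp_comm (hii (C x) 0 s le_rfl hs.le))]
    have h2 : (∫ r in (0:ℝ)..s, S t (S r (C x))) = ∫ r in (0:ℝ)..s, S (t + r) (C x) := by
      apply intervalIntegral.integral_congr
      intro r hr
      have hr0 : (0:ℝ) ≤ r := uIcc_subset_Ici0 le_rfl hs.le hr
      show S t (S r (C x)) = S (t + r) (C x)
      rw [hS.map_add t r ht.le hr0]; rfl
    have h3 : (∫ r in (0:ℝ)..s, S (t + r) (C x)) = ∫ r in (t+0)..(t+s), S r (C x) :=
      intervalIntegral.integral_comp_add_left (fun r => S r (C x)) t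
    have hsplit1 : (∫ r in t..(t+s), S r (C x)) =
        (∫ r in t..s, S r (C x)) + ∫ r in s..(t+s), S r (C x) :=
      (intervalIntegral.integral_add_adjacent_intervals (hii (C x) t s ht.le hs.le)
        (hii (C x) s (t+s) hs.le (by positivity))).symm
    have hsplit2 : (∫ r in (0:ℝ)..s, S r (C x)) =
        (∫ r in (0:ℝ)..t, S r (C x)) + ∫ r in t..s, S r (C x) :=
      (intervalIntegral.integral_add_adjacent_intervals (hii (C x) 0 t le_rfl ht.le)
        (hii (C x) t s ht.le hs.le)).symm
    rw [h1, h2, h3, add_zero, hCsx, hsplit1, hsplit2]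
    rw [show s + t = t + s from add_comm s t, show (0:ℝ) + t = t from zero_add t]
    abel
  refine ⟨Cs, hCsx, ?_, ?_⟩
  · intro x
    have hlim1 := ftc_right (hcont (C x)) hs.le
    have hlim2 := ftc_right (hcont (C x)) (le_refl (0:ℝ))
    have hS0 : S 0 (C x) = C x := by rw [hS.map_zero]; rfl
    rw [hS0] at hlim2
    have hval : (((S s).comp C) - C) x = S s (C x) - C x := rfl
    rw [hval]
    apply Tendsto.congr' ?_ (hlim1.sub hlim2)
    filter_upwards [self_mem_nhdsWithin] with t ht
    rw [hdiff t ht x, smul_sub]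
  · refine ⟨2*(B*‖C‖), fun t ht => ?_⟩
    obtain ⟨ht0, ht1⟩ := ht
    rw [show 2*(B*‖C‖) * t = (2*(B*‖C‖)*t) from rfl]
    apply ContinuousLinearMap.opNorm_le_bound _
      (by have := norm_nonneg C; positivity)
    intro x
    rw [ContinuousLinearMap.sub_apply, hdiff t ht0 x]
    have hbnd : ∀ (a : ℝ), 0 ≤ a → a + t ≤ s + 1 →
        ‖∫ r in a..(a+t), S r (C x)‖ ≤ B * ‖C‖ * ‖x‖ * t := by
      intro a ha hat
      have hpt : ∀ r ∈ Set.uIoc a (a+t), ‖S r (C x)‖ ≤ B * ‖C‖ * ‖x‖ := by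
        intro r hr
        rw [Set.uIoc_of_le (by linarith)] at hr
        calc ‖S r (C x)‖ ≤ ‖S r‖ * ‖C x‖ := (S r).le_opNorm _
          _ ≤ B * (‖C‖ * ‖x‖) := mul_le_mul (hB r (by linarith [hr.1]) (by linarith [hr.2]))
              (C.le_opNorm x) (norm_nonneg _) hB0
          _ = B * ‖C‖ * ‖x‖ := by ring
      have hn := intervalIntegral.norm_integral_le_of_norm_le_const hpt
      rwa [add_sub_cancel_left, abs_of_pos ht0] at hn
    calc ‖(∫ r in s..(s+t), S r (C x)) - ∫ r in (0:ℝ)..(0+t), S r (C x)‖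
        ≤ ‖∫ r in s..(s+t), S r (C x)‖ + ‖∫ r in (0:ℝ)..(0+t), S r (C x)‖ := norm_sub_le _ _
      _ ≤ B * ‖C‖ * ‖x‖ * t + B * ‖C‖ * ‖x‖ * t := by
          refine add_le_add (hbnd s hs.le (by linarith)) ?_
          have := hbnd 0 le_rfl (by linarith)
          simpa using this
      _ = 2*(B*‖C‖)*t*‖x‖ := by ring

/-- If the perturbed semigroup of an implemented semigroup by an admissible
`𝒦` is again implemented, then `𝒦(C∘D) = 𝒦(C)∘D`. -/
theorem stmt_6 [CompleteSpace E] [CompleteSpace E₁]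
    (T S : ℝ → E →L[ℝ] E) (T₁ : ℝ → E₁ →L[ℝ] E₁) (ι : E →L[ℝ] E₁) (Am : E ≃L[ℝ] E₁)
    (hExt : ExtrapolationData T T₁ ι Am) (hS : IsC0Semigroup S)
    (t₀ : ℝ) (ht₀ : 0 < t₀) (K : (E →L[ℝ] E) →L[ℝ] (E →L[ℝ] E₁))
    (hK : MemSDSsot T₁ ι K t₀)
    (hgen : GeneratedByPerturbedImpl (implemented S) ι Am K) :
    ∀ C D : E →L[ℝ] E, K (C.comp D) = (K C).comp D := by
  intro C D
  obtain ⟨hKsot, -⟩ := hK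
  obtain ⟨hV, hIff⟩ := hgen
  obtain ⟨M, hM1, ω, hMω⟩ := hV.expBound
  have hbd : ∀ r : ℝ, 0 ≤ r → ‖S r‖ ≤ M * Real.exp (ω * r) := by
    intro r hr
    have h1 : S r = (implemented S r) 1 := by ext x; rfl
    calc ‖S r‖ = ‖(implemented S r) (1 : E →L[ℝ] E)‖ := by rw [← h1]
      _ ≤ ‖implemented S r‖ * ‖(1 : E →L[ℝ] E)‖ := ContinuousLinearMap.le_opNorm _ _
      _ ≤ (M * Real.exp (ω*r)) * 1 := by
          refine mul_le_mul (hMω r hr) ContinuousLinearMap.norm_id_le (norm_nonneg _) ?_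
          have := Real.exp_pos (ω*r); nlinarith
      _ = M * Real.exp (ω*r) := mul_one _
  have key : ∀ s : ℝ, 0 < s → ∃ Cs : E →L[ℝ] E,
      (∀ x, Cs x = ∫ r in (0:ℝ)..s, S r (C x)) ∧ K (Cs.comp D) = (K Cs).comp D := by
    intro s hss
    obtain ⟨Cs, hCsx, hCsGen⟩ := exists_dom S hS M ω hbd hss C
    obtain ⟨Cs', hCs'x, hCs'Gen⟩ := exists_dom S hS M ω hbd hss (C.comp D)
    simp only [ContinuousLinearMap.comp_apply] at hCs'x
    have hCsD : Cs' = Cs.comp D := by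
      ext x
      rw [hCs'x x, ContinuousLinearMap.comp_apply, hCsx (D x)]
    have e1 := (hIff Cs _).mp hCsGen
    have e2 := (hIff Cs' _).mp hCs'Gen
    rw [hCsD] at e2
    refine ⟨Cs, hCsx, ?_⟩
    ext x
    have h1 := congrArg (fun (X : E →L[ℝ] E₁) => X (D x)) e1
    have h2 := congrArg (fun (X : E →L[ℝ] E₁) => X x) e2
    simp only [ContinuousLinearMap.comp_apply, ContinuousLinearMap.add_apply,
      ContinuousLinearMap.sub_apply, ContinuousLinearMap.coe_coe] at h1 h2
    rw [ContinuousLinearMap.comp_apply]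
    exact (add_left_cancel (h1.symm.trans h2)).symm
  ext x
  rw [ContinuousLinearMap.comp_apply]
  obtain ⟨v, c, hc0, hcv⟩ := hKsot x
  obtain ⟨w, c', hc'0, hcw⟩ := hKsot (D x)
  set a : E₁ := (K (C.comp D)) x with ha
  set b : E₁ := (K C) (D x) with hb
  have hbound : ∀ᶠ (s:ℝ) in nhdsWithin 0 (Ioi 0),
      ‖a - b‖ ≤ c * ∑ y ∈ v, ‖C (D y) - s⁻¹ • ∫ r in (0:ℝ)..s, S r (C (D y))‖
        + c' * ∑ y ∈ w, ‖C y - s⁻¹ • ∫ r in (0:ℝ)..s, S r (C y)‖ := by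
    filter_upwards [self_mem_nhdsWithin] with s hs
    obtain ⟨Cs, hCsx, hKeq⟩ := key s hs
    have h1 : (K (s⁻¹ • (Cs.comp D))) x = (K (s⁻¹ • Cs)) (D x) := by
      rw [_root_.map_smul, _root_.map_smul, ContinuousLinearMap.smul_apply,
        ContinuousLinearMap.smul_apply, hKeq, ContinuousLinearMap.comp_apply]
    have hsplit : a - b = (K (C.comp D - s⁻¹ • (Cs.comp D))) x + (K (s⁻¹ • Cs - C)) (D x) := by
      rw [map_sub, map_sub, ContinuousLinearMap.sub_apply, ContinuousLinearMap.sub_apply, h1]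
      abel
    rw [hsplit]
    refine le_trans (norm_add_le _ _) (add_le_add ?_ ?_)
    · refine le_trans (hcv _) (le_of_eq ?_)
      congr 1
      refine Finset.sum_congr rfl fun y _ => ?_
      congr 1
      rw [ContinuousLinearMap.sub_apply, ContinuousLinearMap.smul_apply,
        ContinuousLinearMap.comp_apply, ContinuousLinearMap.comp_apply, hCsx (D y)]
    · refine le_trans (hcw _) (le_of_eq ?_)
      congr 1
      refine Finset.sum_congr rfl fun y _ => ?_
      rw [ContinuousLinearMap.sub_apply, ContinuousLinearMap.smul_apply, hCsx y, norm_sub_rev]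
  have hz : ∀ z : E, Tendsto (fun s : ℝ => ‖z - s⁻¹ • ∫ r in (0:ℝ)..s, S r z‖)
      (nhdsWithin 0 (Ioi 0)) (nhds 0) := by
    intro z
    have h1 := ftc_right (hS.strongCont z) (le_refl (0:ℝ))
    have hS0 : S 0 z = z := by rw [hS.map_zero]; rfl
    rw [hS0] at h1
    have h2 : Tendsto (fun s : ℝ => s⁻¹ • ∫ r in (0:ℝ)..s, S r z)
        (nhdsWithin 0 (Ioi 0)) (nhds z) := by
      refine h1.congr fun s => ?_
      rw [zero_add]
    have h3 := ((tendsto_const_nhds (x := z)).sub h2).norm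
    simpa using h3
  have hlim : Tendsto (fun s : ℝ =>
      c * ∑ y ∈ v, ‖C (D y) - s⁻¹ • ∫ r in (0:ℝ)..s, S r (C (D y))‖
        + c' * ∑ y ∈ w, ‖C y - s⁻¹ • ∫ r in (0:ℝ)..s, S r (C y)‖)
      (nhdsWithin 0 (Ioi 0)) (nhds 0) := by
    have hsum1 := (tendsto_finset_sum v (fun y _ => hz (C (D y)))).const_mul c
    have hsum2 := (tendsto_finset_sum w (fun y _ => hz (C y))).const_mul c'
    have := hsum1.add hsum2
    simpa using this
  have hle : ‖a - b‖ ≤ 0 := ge_of_tendsto hlim hbound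
  have : a - b = 0 := by
    have := le_antisymm hle (norm_nonneg _)
    exact norm_eq_zero.mp this
  exact sub_eq_zero.mp this
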